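/- Let A be a C*-algebra and let a, b ∈ A be positive elements such that b lies in the hereditary subalgebra closure(aAa) and b is Cuntz equivalent to a. Then for every t ∈ [0,1], the positive element (1−t)a + tb is Cuntz equivalent to a; in particular the segment t ↦ (1−t)a + tb is a path of positive elements of constant Cuntz class from a to b. -/

import Mathlib

open Filter Topology

section Defs

variable {A : Type*}

/-- Cuntz subequivalence: `a ≾ b` iff there is a sequence `vₙ` with `‖vₙ * b * vₙ* - a‖ → 0`. -/
def CuntzLE [NonUnitalCStarAlgebra A] (a b : A) : Prop :=
  ∃ v : ℕ → A, Tendsto (fun n => ‖v n * b * star (v n) - a‖) atTop (𝓝 0)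

/-- Cuntz equivalence: `a ∼ b` iff `a ≾ b` and `b ≾ a`. -/
def CuntzEquiv [NonUnitalCStarAlgebra A] (a b : A) : Prop :=
  CuntzLE a b ∧ CuntzLE b a

/-- A projection: a self-adjoint idempotent. -/
def IsProjection [Mul A] [Star A] (p : A) : Prop :=
  IsSelfAdjoint p ∧ p * p = p

/-- Murray–von Neumann equivalence of projections. -/
def MvNEquiv [Mul A] [Star A] (p q : A) : Prop :=
  ∃ v : A, star v * v = p ∧ v * star v = q

/-- The hereditary subalgebra generated by a positive element `a`: the closure of `a A a`. -/
def her [NonUnitalCStarAlgebra A] (a : A) : Set A :=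
  closure {x : A | ∃ y : A, x = a * y * a}

/-- A C*-algebra is simple if its only closed two-sided ideals are `⊥` and `⊤`. -/
def IsSimpleCStarAlgebra (A : Type*) [NonUnitalCStarAlgebra A] : Prop :=
  ∀ I : TwoSidedIdeal A, IsClosed (I : Set A) → I = ⊥ ∨ I = ⊤

/-- A unital C*-algebra is approximately divisible if for each `N ≥ 1` there is an
approximately central sequence of unital `*`-homomorphisms `M_N(ℂ) ⊕ M_{N+1}(ℂ) → A`. -/
def ApproximatelyDivisible (A : Type*) [CStarAlgebra A] : Prop :=
  ∀ N : ℕ, 0 < N →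
    ∃ φ : ℕ → (Matrix (Fin N) (Fin N) ℂ × Matrix (Fin (N + 1)) (Fin (N + 1)) ℂ) →⋆ₐ[ℂ] A,
      ∀ x c, Tendsto (fun n => ‖(φ n) x * c - c * (φ n) x‖) atTop (𝓝 (0 : ℝ))

/-- Real rank zero: every self-adjoint element is a norm limit of self-adjoint elements
with finite spectrum. -/
def RealRankZero (A : Type*) [CStarAlgebra A] : Prop :=
  ∀ a : A, IsSelfAdjoint a → ∀ ε : ℝ, 0 < ε →
    ∃ b : A, IsSelfAdjoint b ∧ (spectrum ℂ b).Finite ∧ ‖a - b‖ < ε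

/-- Stable finiteness: every isometry in every matrix algebra over `A` is a unitary. -/
def StablyFinite (A : Type*) [CStarAlgebra A] : Prop :=
  ∀ n : ℕ, ∀ v : Matrix (Fin n) (Fin n) A, star v * v = 1 → v * star v = 1

/-- A tracial state: a unital positive linear functional satisfying the trace identity. -/
def IsTracialState [CStarAlgebra A] (φ : A →ₗ[ℂ] ℂ) : Prop :=
  φ 1 = 1 ∧ (∀ x : A, ∃ r : ℝ, 0 ≤ r ∧ φ (star x * x) = (r : ℂ)) ∧
    ∀ x y : A, φ (x * y) = φ (y * x)

/-- The dimension function associated to a tracial state: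
`d_τ(a) = lim_{n → ∞} τ(a^{1/n})`. -/
noncomputable def dTau [CStarAlgebra A] (φ : A →ₗ[ℂ] ℂ) (a : A) : ℝ :=
  limUnder atTop (fun n : ℕ => (φ (cfc (fun t : ℝ => t ^ ((n : ℝ)⁻¹)) a)).re)

/-- Strict comparison of positive elements with respect to tracial states. -/
def StrictComparison (A : Type*) [CStarAlgebra A] [PartialOrder A] [StarOrderedRing A] : Prop :=
  ∀ a b : A, 0 ≤ a → 0 ≤ b →
    (∀ φ : A →ₗ[ℂ] ℂ, IsTracialState φ → dTau φ a < dTau φ b) → CuntzLE a b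

end Defs

section Aux

local notation "σₙ" => quasispectrum
local notation "σ" => spectrum

variable {A : Type*} [NonUnitalCStarAlgebra A]

lemma cuntzLE_iff_mem_closure (a b : A) :
    CuntzLE a b ↔ a ∈ closure (Set.range fun v : A => v * b * star v) := by
  rw [mem_closure_iff_seq_limit]
  constructor
  · rintro ⟨v, hv⟩
    refine ⟨fun n => v n * b * star (v n), fun n => ⟨v n, rfl⟩, ?_⟩
    rw [tendsto_iff_norm_sub_tendsto_zero]
    exact hv
  · rintro ⟨f, hf, hlim⟩
    choose v hv using hf
    refine ⟨v, ?_⟩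
    have := tendsto_iff_norm_sub_tendsto_zero.mp hlim
    simpa only [hv] using this

lemma CuntzLE.trans' {a b c : A} (h1 : CuntzLE a b) (h2 : CuntzLE b c) : CuntzLE a c := by
  rw [cuntzLE_iff_mem_closure] at h1 h2 ⊢
  refine closure_minimal ?_ isClosed_closure h1
  rintro x ⟨v, rfl⟩
  have hcont : Continuous fun w : A => v * w * star v :=
    (continuous_const.mul continuous_id).mul continuous_const
  have key : v * b * star v ∈
      closure ((fun w : A => v * w * star v) '' (Set.range fun u : A => u * c * star u)) :=
    image_closure_subset_closure_image hcont ⟨b, h2, rfl⟩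
  refine closure_mono ?_ key
  rintro y ⟨z, ⟨u, rfl⟩, rfl⟩
  exact ⟨v * u, by simp only [star_mul, mul_assoc]⟩

/-- Elementary real estimate used for the cfc approximations. -/
lemma real_bound {ε s : ℝ} (hε : 0 < ε) (hs : 0 ≤ s) :
    |s ^ 3 / (s ^ 2 + ε) - s| ≤ Real.sqrt ε := by
  have hd : (0 : ℝ) < s ^ 2 + ε := by positivity
  have h1 : s ^ 3 / (s ^ 2 + ε) - s = -(ε * s / (s ^ 2 + ε)) := by
    field_simp
    ring
  rw [h1, abs_neg, abs_of_nonneg (by positivity), div_le_iff₀ hd]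
  have ht : (0:ℝ) ≤ Real.sqrt ε := Real.sqrt_nonneg ε
  have hts : Real.sqrt ε * Real.sqrt ε = ε := Real.mul_self_sqrt hε.le
  nlinarith [mul_nonneg ht (sq_nonneg (s - Real.sqrt ε)), hts,
    mul_nonneg (mul_nonneg hs ht) ht]

variable [PartialOrder A] [StarOrderedRing A]

lemma cont_aux (ε : ℝ) (hε : 0 < ε) (k : ℕ) :
    Continuous fun s : ℝ => s ^ k / (s ^ 2 + ε) :=
  (continuous_pow k).div (by continuity) fun s => by positivity

/-- Approximation of a positive element by `cfcₙ (s ↦ s³/(s² + 1/(n+1)))`. -/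
lemma tendsto_cfcₙ_cube (x : A) (hx : 0 ≤ x) :
    Filter.Tendsto (fun n : ℕ => cfcₙ (fun s : ℝ => s ^ 3 / (s ^ 2 + 1 / (n + 1))) x)
      Filter.atTop (nhds x) := by
  have hx_sa : IsSelfAdjoint x := .of_nonneg hx
  rw [tendsto_iff_norm_sub_tendsto_zero]
  have hbound : ∀ n : ℕ,
      ‖cfcₙ (fun s : ℝ => s ^ 3 / (s ^ 2 + 1 / (n + 1))) x - x‖ ≤ Real.sqrt (1 / (n + 1)) := by
    intro n
    have hε : (0:ℝ) < 1 / (n + 1) := by positivity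
    have hc : ContinuousOn (fun s : ℝ => s ^ 3 / (s ^ 2 + 1 / (n + 1))) (σₙ ℝ x) :=
      (cont_aux _ hε 3).continuousOn
    have hsub : cfcₙ (fun s : ℝ => s ^ 3 / (s ^ 2 + 1 / (n + 1)) - s) x
        = cfcₙ (fun s : ℝ => s ^ 3 / (s ^ 2 + 1 / (n + 1))) x - x := by
      rw [cfcₙ_sub (fun s : ℝ => s ^ 3 / (s ^ 2 + 1 / (n + 1))) (fun s : ℝ => s) x hc (by simp)
        continuousOn_id rfl, cfcₙ_id' ℝ x hx_sa]
    rw [← hsub]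
    refine norm_cfcₙ_le fun s hs => ?_
    have hs0 : 0 ≤ s := quasispectrum_nonneg_of_nonneg x hx s hs
    simpa [Real.norm_eq_abs] using real_bound hε hs0
  refine squeeze_zero (fun n => norm_nonneg _) hbound ?_
  have h0 : Filter.Tendsto (fun n : ℕ => 1 / ((n : ℝ) + 1)) Filter.atTop (nhds 0) :=
    tendsto_one_div_add_atTop_nhds_zero_nat
  have : Filter.Tendsto Real.sqrt (nhds 0) (nhds 0) := by
    simpa using (Real.continuous_sqrt.tendsto (0:ℝ))
  exact this.comp h0

/-- Any positive element lies in its own hereditary subalgebra. -/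
lemma mem_her_self {a : A} (ha : 0 ≤ a) : a ∈ her a := by
  have ha_sa : IsSelfAdjoint a := .of_nonneg ha
  rw [her, mem_closure_iff_seq_limit]
  refine ⟨fun n => cfcₙ (fun s : ℝ => s ^ 3 / (s ^ 2 + 1 / (n + 1))) a, fun n => ?_,
    tendsto_cfcₙ_cube a ha⟩
  have hε : (0:ℝ) < 1 / (n + 1) := by positivity
  refine ⟨cfcₙ (fun s : ℝ => s / (s ^ 2 + 1 / (n + 1))) a, ?_⟩
  have hc : ContinuousOn (fun s : ℝ => s / (s ^ 2 + 1 / (n + 1))) (σₙ ℝ a) := by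
    simpa using (cont_aux (1 / (n + 1)) hε 1).continuousOn (s := σₙ ℝ a)
  have h1 : cfcₙ (fun s : ℝ => s * (s / (s ^ 2 + 1 / (n + 1)))) a
      = a * cfcₙ (fun s : ℝ => s / (s ^ 2 + 1 / (n + 1))) a := by
    rw [cfcₙ_mul (fun s : ℝ => s) (fun s : ℝ => s / (s ^ 2 + 1 / (n + 1))) a continuousOn_id rfl
      hc (by simp), cfcₙ_id' ℝ a ha_sa]
  have h2 : cfcₙ (fun s : ℝ => (s * (s / (s ^ 2 + 1 / (n + 1)))) * s) a
      = cfcₙ (fun s : ℝ => s * (s / (s ^ 2 + 1 / (n + 1)))) a * a := by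
    rw [cfcₙ_mul (fun s : ℝ => s * (s / (s ^ 2 + 1 / (n + 1)))) (fun s : ℝ => s) a
      (continuousOn_id.mul hc) (by simp) continuousOn_id rfl, cfcₙ_id' ℝ a ha_sa]
  rw [← h1, ← h2]
  refine cfcₙ_congr fun s _ => ?_
  show s ^ 3 / (s ^ 2 + 1 / (n + 1)) = s * (s / (s ^ 2 + 1 / (n + 1))) * s
  ring

lemma her_add {a x y : A} (hx : x ∈ her a) (hy : y ∈ her a) : x + y ∈ her a := by
  rw [her, mem_closure_iff_seq_limit] at hx hy ⊢
  obtain ⟨u, hu_mem, hu⟩ := hx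
  obtain ⟨w, hw_mem, hw⟩ := hy
  refine ⟨fun n => u n + w n, fun n => ?_, hu.add hw⟩
  obtain ⟨p, hp⟩ := hu_mem n
  obtain ⟨q, hq⟩ := hw_mem n
  exact ⟨p + q, by dsimp only; rw [hp, hq, mul_add, add_mul]⟩

lemma her_smul {a : A} (r : ℝ) {x : A} (hx : x ∈ her a) : r • x ∈ her a := by
  rw [her, mem_closure_iff_seq_limit] at hx ⊢
  obtain ⟨u, hu_mem, hu⟩ := hx
  refine ⟨fun n => r • u n, fun n => ?_, hu.const_smul r⟩
  obtain ⟨p, hp⟩ := hu_mem n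
  exact ⟨r • p, by dsimp only; rw [hp, mul_smul_comm, smul_mul_assoc]⟩

lemma her_smul_eq {a : A} {r : ℝ} (hr : r ≠ 0) : her (r • a) = her a := by
  have key : {x : A | ∃ y : A, x = (r • a) * y * (r • a)} = {x : A | ∃ y : A, x = a * y * a} := by
    ext x
    constructor
    · rintro ⟨y, rfl⟩
      exact ⟨(r * r) • y, by simp [smul_mul_assoc, mul_smul_comm, smul_smul, mul_comm]⟩
    · rintro ⟨y, rfl⟩
      refine ⟨(r⁻¹ * r⁻¹) • y, ?_⟩
      simp [smul_mul_assoc, mul_smul_comm, smul_smul]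
      rw [show r * (r⁻¹ * r⁻¹ * r) = 1 by field_simp, one_smul]
  rw [her, her, key]

/-- A positive element of the hereditary subalgebra of `a` is Cuntz below `a`. -/
lemma her_cuntzLE {a x : A} (ha : 0 ≤ a) (hx : 0 ≤ x) (hmem : x ∈ her a) : CuntzLE x a := by
  have ha_sa : IsSelfAdjoint a := .of_nonneg ha
  have hx_sa : IsSelfAdjoint x := .of_nonneg hx
  -- Step A : x ≾ x * x
  have stepA : CuntzLE x (x * x) := by
    set g : ℕ → ℝ → ℝ := fun n s => Real.sqrt (s / (s ^ 2 + 1 / (n + 1))) with hg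
    have hgc : ∀ n, Continuous (g n) := by
      intro n
      have hε : (0:ℝ) < 1 / (n + 1) := by positivity
      exact Real.continuous_sqrt.comp (by simpa using cont_aux (1 / (n+1)) hε 1)
    have hg0 : ∀ n, g n 0 = 0 := by intro n; simp [hg]
    refine ⟨fun n => cfcₙ (g n) x, ?_⟩
    have hkey : ∀ n : ℕ, cfcₙ (g n) x * (x * x) * star (cfcₙ (g n) x)
        = cfcₙ (fun s : ℝ => s ^ 3 / (s ^ 2 + 1 / (n + 1))) x := by
      intro n
      have hsa : IsSelfAdjoint (cfcₙ (g n) x) := cfcₙ_predicate (R := ℝ) (p := IsSelfAdjoint) (g n) x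
      rw [hsa.star_eq]
      have hxx : x * x = cfcₙ (fun s : ℝ => s * s) x := by
        rw [cfcₙ_mul (fun s : ℝ => s) (fun s : ℝ => s) x continuousOn_id rfl continuousOn_id rfl,
          cfcₙ_id' ℝ x hx_sa]
      rw [hxx, ← cfcₙ_mul (g n) (fun s : ℝ => s * s) x (hgc n).continuousOn (hg0 n)
          (continuousOn_id.mul continuousOn_id) (by simp),
        ← cfcₙ_mul (fun s : ℝ => g n s * (s * s)) (g n) x
          ((hgc n).continuousOn.mul (continuousOn_id.mul continuousOn_id)) (by simp [hg0 n])
          (hgc n).continuousOn (hg0 n)]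
      refine cfcₙ_congr fun s hs => ?_
      have hs0 : 0 ≤ s := quasispectrum_nonneg_of_nonneg x hx s hs
      have hε : (0:ℝ) < 1 / (n + 1) := by positivity
      have hnn : 0 ≤ s / (s ^ 2 + 1 / (n + 1)) := by positivity
      show g n s * (s * s) * g n s = s ^ 3 / (s ^ 2 + 1 / (n + 1))
      have : g n s * g n s = s / (s ^ 2 + 1 / (n + 1)) := Real.mul_self_sqrt hnn
      calc g n s * (s * s) * g n s = (g n s * g n s) * (s * s) := by ring
        _ = s / (s ^ 2 + 1 / (n + 1)) * (s * s) := by rw [this]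
        _ = s ^ 3 / (s ^ 2 + 1 / (n + 1)) := by ring
    have := tendsto_iff_norm_sub_tendsto_zero.mp (tendsto_cfcₙ_cube x hx)
    simp only [← hkey] at this
    exact this
  -- Step B : x * x ∈ closure {v a v*}
  have stepB : CuntzLE (x * x) a := by
    rw [cuntzLE_iff_mem_closure, mem_closure_iff_seq_limit]
    rw [her, mem_closure_iff_seq_limit] at hmem
    obtain ⟨u, hu_mem, hu⟩ := hmem
    choose y hy using hu_mem
    set s0 : A := cfcₙ Real.sqrt a with hs0
    have hs0_sa : IsSelfAdjoint s0 := hs0 ▸ cfcₙ_predicate (R := ℝ) (p := IsSelfAdjoint) Real.sqrt a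
    have hs0_sq : s0 * s0 = a := by
      rw [hs0, ← cfcₙ_mul Real.sqrt Real.sqrt a Real.continuous_sqrt.continuousOn (by simp)
        Real.continuous_sqrt.continuousOn (by simp)]
      conv_rhs => rw [← cfcₙ_id ℝ a ha_sa]
      refine cfcₙ_congr (R := ℝ) fun s hs => ?_
      have hs0' : 0 ≤ s := quasispectrum_nonneg_of_nonneg a ha s hs
      simpa using Real.mul_self_sqrt hs0'
    have hmid : s0 * a * s0 = a * a := by
      conv_lhs => rw [← hs0_sq]
      rw [show s0 * (s0 * s0) * s0 = (s0 * s0) * (s0 * s0) by simp only [mul_assoc], hs0_sq]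
    set z : ℕ → A := fun n => (1/2 : ℝ) • (y n + star (y n)) with hz
    have hz_sa : ∀ n, star (z n) = z n := by
      intro n
      simp [hz, star_smul, star_add, add_comm]
    set w : ℕ → A := fun n => a * z n * a with hw
    have hw_eq : ∀ n, w n = (1/2 : ℝ) • (u n + star (u n)) := by
      intro n
      simp only [hw, hz, hy n, star_mul, ha_sa.star_eq]
      simp [mul_add, add_mul, smul_mul_assoc, mul_smul_comm, mul_assoc]
    have hwlim : Filter.Tendsto w Filter.atTop (nhds x) := by
      have h1 : Filter.Tendsto (fun n => star (u n)) Filter.atTop (nhds (star x)) :=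
        (continuous_star.tendsto x).comp hu
      rw [hx_sa.star_eq] at h1
      have h2 := (hu.add h1).const_smul (1/2 : ℝ)
      have h3 : (1/2 : ℝ) • (x + x) = x := by
        rw [show x + x = (2:ℝ) • x from (two_smul ℝ x).symm, smul_smul]
        norm_num
      rw [h3] at h2
      simpa only [← hw_eq] using h2
    have hid : ∀ n, (a * z n * s0) * a * star (a * z n * s0) = w n * w n := by
      intro n
      rw [star_mul, star_mul, hz_sa n, ha_sa.star_eq, hs0_sa.star_eq]
      have e1 : a * z n * s0 * a * (s0 * (z n * a)) = a * z n * (s0 * a * s0) * (z n * a) := by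
        simp only [mul_assoc]
      rw [e1, hmid]
      simp only [hw, mul_assoc]
    exact ⟨fun n => w n * w n, fun n => ⟨a * z n * s0, hid n⟩, hwlim.mul hwlim⟩
  exact stepA.trans' stepB

/-- The key estimate, in a unital C*-algebra. -/
lemma rordam_estimate {B : Type*} [CStarAlgebra B] [PartialOrder B] [StarOrderedRing B]
    {X Z S : B} (hX : 0 ≤ X) (hZ : 0 ≤ Z) (hXZ : X ≤ Z)
    (hS_sa : IsSelfAdjoint S) (hSS : S * S = X) (ε : ℝ) (hε : 0 < ε) :
    ‖X - (S * cfc (fun u : ℝ => (Real.sqrt (u + ε))⁻¹) Z) * Z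
        * star (S * cfc (fun u : ℝ => (Real.sqrt (u + ε))⁻¹) Z)‖ ≤ ε := by
  have hZ_sa : IsSelfAdjoint Z := .of_nonneg hZ
  have hspec : ∀ u ∈ spectrum ℝ Z, 0 ≤ u := fun u hu => spectrum_nonneg_of_nonneg hZ hu
  have hpos : ∀ u ∈ spectrum ℝ Z, (0:ℝ) < u + ε := fun u hu => by
    have := hspec u hu; linarith
  set f : ℝ → ℝ := fun u => (Real.sqrt (u + ε))⁻¹ with hf
  have hfc : ContinuousOn f (spectrum ℝ Z) := by
    refine ContinuousOn.inv₀ ((Real.continuous_sqrt.comp (by continuity)).continuousOn)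
      fun u hu => ?_
    have := hpos u hu
    positivity
  set Q : B := cfc f Z with hQdef
  have hQ_sa : IsSelfAdjoint Q := hQdef ▸ cfc_predicate (R := ℝ) (p := IsSelfAdjoint) f Z
  have hzid : cfc (fun u : ℝ => u) Z = Z := cfc_id' ℝ Z hZ_sa
  have hidc : ContinuousOn (fun u : ℝ => u) (spectrum ℝ Z) := continuousOn_id
  -- Q * Z * Q = cfc (u / (u + ε)) Z
  have hQzQ : Q * Z * Q = cfc (fun u : ℝ => u / (u + ε)) Z := by
    have e1 : Q * Z * Q = cfc (fun u : ℝ => f u * u * f u) Z := by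
      rw [cfc_mul (fun u : ℝ => f u * u) f Z (hfc.mul hidc) hfc,
        cfc_mul f (fun u : ℝ => u) Z hfc hidc, hzid]
      all_goals rw [hQdef]
    rw [e1]
    refine cfc_congr fun u hu => ?_
    have h1 : Real.sqrt (u + ε) * Real.sqrt (u + ε) = u + ε := Real.mul_self_sqrt (hpos u hu).le
    have h2 : Real.sqrt (u + ε) ≠ 0 := by have := hpos u hu; positivity
    show f u * u * f u = u / (u + ε)
    calc f u * u * f u = u * (Real.sqrt (u + ε) * Real.sqrt (u + ε))⁻¹ := by
          rw [hf]; rw [mul_inv]; ring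
      _ = u / (u + ε) := by rw [h1, div_eq_mul_inv]
  have hfun_c : ContinuousOn (fun u : ℝ => u / (u + ε)) (spectrum ℝ Z) :=
    ContinuousOn.div hidc (hidc.add continuousOn_const) fun u hu => (hpos u hu).ne'
  have hfun_nonneg : ∀ u ∈ spectrum ℝ Z, 0 ≤ 1 - u / (u + ε) := by
    intro u hu
    have h1 : u / (u + ε) ≤ 1 := by
      rw [div_le_one (hpos u hu)]; linarith
    linarith
  -- the difference
  have hstar : star (S * Q) = Q * S := by rw [star_mul, hQ_sa.star_eq, hS_sa.star_eq]
  have hdiff : X - (S * Q) * Z * star (S * Q)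
      = S * cfc (fun u : ℝ => 1 - u / (u + ε)) Z * S := by
    rw [hstar]
    have e1 : S * Q * Z * (Q * S) = S * (Q * Z * Q) * S := by simp only [mul_assoc]
    rw [e1, hQzQ,
      cfc_sub (fun _ : ℝ => (1:ℝ)) (fun u : ℝ => u / (u + ε)) Z continuousOn_const hfun_c,
      cfc_const_one ℝ Z, mul_sub, sub_mul, mul_one, hSS]
  rw [hdiff]
  -- factor the middle as k * k
  set k : B := cfc (fun u : ℝ => Real.sqrt (1 - u / (u + ε))) Z with hkdef
  have hk_sa : IsSelfAdjoint k :=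
    hkdef ▸ cfc_predicate (R := ℝ) (p := IsSelfAdjoint) (fun u : ℝ => Real.sqrt (1 - u / (u + ε))) Z
  have hkcont : ContinuousOn (fun u : ℝ => Real.sqrt (1 - u / (u + ε))) (spectrum ℝ Z) :=
    Real.continuous_sqrt.comp_continuousOn (continuousOn_const.sub hfun_c)
  have hkk : k * k = cfc (fun u : ℝ => 1 - u / (u + ε)) Z := by
    rw [hkdef, ← cfc_mul _ _ Z hkcont hkcont]
    exact cfc_congr fun u hu => Real.mul_self_sqrt (hfun_nonneg u hu)
  rw [← hkk]
  have e2 : S * (k * k) * S = star (k * S) * (k * S) := by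
    rw [star_mul, hk_sa.star_eq, hS_sa.star_eq]; simp only [mul_assoc]
  rw [e2, CStarRing.norm_star_mul_self, ← CStarRing.norm_self_mul_star]
  have e4 : k * S * star (k * S) = star k * X * k := by
    rw [star_mul, hS_sa.star_eq, hk_sa.star_eq, ← hSS]
    simp only [mul_assoc]
  have e5 : k * S * star (k * S) ≤ star k * Z * k := e4 ▸ star_left_conjugate_le_conjugate hXZ k
  have e6 : ‖k * S * star (k * S)‖ ≤ ‖star k * Z * k‖ :=
    CStarAlgebra.norm_le_norm_of_nonneg_of_le (mul_star_self_nonneg (k * S)) e5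
  refine e6.trans ?_
  have e7 : star k * Z * k
      = cfc (fun u : ℝ => Real.sqrt (1 - u / (u + ε)) * u * Real.sqrt (1 - u / (u + ε))) Z := by
    rw [hk_sa.star_eq,
      cfc_mul (fun u : ℝ => Real.sqrt (1 - u / (u + ε)) * u)
        (fun u : ℝ => Real.sqrt (1 - u / (u + ε))) Z (hkcont.mul hidc) hkcont,
      cfc_mul (fun u : ℝ => Real.sqrt (1 - u / (u + ε))) (fun u : ℝ => u) Z hkcont hidc,
      hzid]
    all_goals rw [hkdef]
  rw [e7]
  refine norm_cfc_le hε.le fun u hu => ?_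
  have hu0 : 0 ≤ u := hspec u hu
  have hval : Real.sqrt (1 - u / (u + ε)) * u * Real.sqrt (1 - u / (u + ε))
      = (1 - u / (u + ε)) * u := by
    rw [show Real.sqrt (1 - u / (u + ε)) * u * Real.sqrt (1 - u / (u + ε))
      = (Real.sqrt (1 - u / (u + ε)) * Real.sqrt (1 - u / (u + ε))) * u by ring,
      Real.mul_self_sqrt (hfun_nonneg u hu)]
  rw [hval, Real.norm_eq_abs, abs_of_nonneg (mul_nonneg (hfun_nonneg u hu) hu0)]
  have heq : (1 - u / (u + ε)) * u = ε * (u / (u + ε)) := by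
    field_simp
    ring
  rw [heq]
  have h1 : u / (u + ε) ≤ 1 := by rw [div_le_one (hpos u hu)]; linarith
  calc ε * (u / (u + ε)) ≤ ε * 1 := mul_le_mul_of_nonneg_left h1 hε.le
    _ = ε := mul_one _

/-- Rørdam's lemma: if `0 ≤ x ≤ z` then `x ≾ z`. -/
lemma cuntzLE_of_le {x z : A} (hx : 0 ≤ x) (hz : 0 ≤ z) (hxz : x ≤ z) : CuntzLE x z := by
  have hx_sa : IsSelfAdjoint x := .of_nonneg hx
  have hz_sa : IsSelfAdjoint z := .of_nonneg hz
  -- square root of x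
  set s : A := cfcₙ Real.sqrt x with hsdef
  have hs_sa : IsSelfAdjoint s := hsdef ▸ cfcₙ_predicate (R := ℝ) (p := IsSelfAdjoint) Real.sqrt x
  have hs_sq : s * s = x := by
    rw [hsdef, ← cfcₙ_mul Real.sqrt Real.sqrt x Real.continuous_sqrt.continuousOn (by simp)
      Real.continuous_sqrt.continuousOn (by simp)]
    conv_rhs => rw [← cfcₙ_id ℝ x hx_sa]
    refine cfcₙ_congr (R := ℝ) fun t ht => ?_
    have ht0 : 0 ≤ t := quasispectrum_nonneg_of_nonneg x hx t ht
    simpa using Real.mul_self_sqrt ht0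
  -- move to the unitization
  have hX : (0 : Unitization ℂ A) ≤ (x : Unitization ℂ A) := Unitization.inr_nonneg_iff.mpr hx
  have hZ : (0 : Unitization ℂ A) ≤ (z : Unitization ℂ A) := Unitization.inr_nonneg_iff.mpr hz
  have hXZ : (x : Unitization ℂ A) ≤ (z : Unitization ℂ A) :=
    (Unitization.inr_le_iff x z hx_sa hz_sa).mpr hxz
  have hS_sa : IsSelfAdjoint ((s : Unitization ℂ A)) := hs_sa.inr ℂ
  have hSS : (s : Unitization ℂ A) * (s : Unitization ℂ A) = (x : Unitization ℂ A) := by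
    rw [← Unitization.inr_mul, hs_sq]
  set v : ℕ → A := fun n =>
    ((s : Unitization ℂ A) * cfc (fun u : ℝ => (Real.sqrt (u + 1 / (n + 1)))⁻¹)
      (z : Unitization ℂ A)).snd with hvdef
  have hvB : ∀ n, ((v n : A) : Unitization ℂ A)
      = (s : Unitization ℂ A) * cfc (fun u : ℝ => (Real.sqrt (u + 1 / (n + 1)))⁻¹)
        (z : Unitization ℂ A) := by
    intro n
    refine Unitization.ext ?_ rfl
    simp [Unitization.fst_mul, hvdef]
  have hbound : ∀ n : ℕ, ‖x - v n * z * star (v n)‖ ≤ 1 / (n + 1) := by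
    intro n
    have hε : (0:ℝ) < 1 / (n + 1) := by positivity
    have hnorm : ‖x - v n * z * star (v n)‖
        = ‖(x : Unitization ℂ A) - ((v n : A) : Unitization ℂ A) * (z : Unitization ℂ A)
            * star ((v n : A) : Unitization ℂ A)‖ := by
      rw [← Unitization.norm_inr (𝕜 := ℂ) (x - v n * z * star (v n))]
      congr 1
      rw [Unitization.inr_sub ℂ, Unitization.inr_mul ℂ, Unitization.inr_mul ℂ,
        Unitization.inr_star]
    rw [hnorm, hvB n]
    exact rordam_estimate hX hZ hXZ hS_sa hSS (1 / (n + 1)) hε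
  refine ⟨v, ?_⟩
  have h0 : Filter.Tendsto (fun n : ℕ => 1 / ((n : ℝ) + 1)) Filter.atTop (nhds 0) :=
    tendsto_one_div_add_atTop_nhds_zero_nat
  refine squeeze_zero (fun n => norm_nonneg _) (fun n => ?_) h0
  rw [← norm_neg, neg_sub]
  exact hbound n

end Aux

/-- If `a`, `b` are positive, `b ∈ her(a)`, and `b ∼ a` (Cuntz), then every
point of the segment `t ↦ (1-t)•a + t•b`, `t ∈ [0,1]`, is positive and Cuntz equivalent
to `a`. -/
theorem segment_constant_cuntz_class {A : Type*} [NonUnitalCStarAlgebra A]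
    [PartialOrder A] [StarOrderedRing A]
    (a b : A) (ha : 0 ≤ a) (hb : 0 ≤ b) (hmem : b ∈ her a) (heq : CuntzEquiv b a) :
    ∀ t ∈ Set.Icc (0 : ℝ) 1,
      0 ≤ (1 - t) • a + t • b ∧ CuntzEquiv ((1 - t) • a + t • b) a := by
  rintro t ⟨ht0, ht1⟩
  have hc : 0 ≤ (1 - t) • a + t • b :=
    add_nonneg (smul_nonneg (by linarith) ha) (smul_nonneg ht0 hb)
  refine ⟨hc, ?_, ?_⟩
  · -- (1-t)a + tb ≾ a
    have hc_mem : (1 - t) • a + t • b ∈ her a :=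
      her_add (her_smul _ (mem_her_self ha)) (her_smul _ hmem)
    exact her_cuntzLE ha hc hc_mem
  · -- a ≾ (1-t)a + tb
    rcases eq_or_lt_of_le ht1 with rfl | hlt
    · have hcb : (1 - 1 : ℝ) • a + (1:ℝ) • b = b := by simp
      rw [hcb]
      exact heq.2
    · have hr : (0:ℝ) < 1 - t := by linarith
      have step1 : CuntzLE a ((1 - t) • a) := by
        refine her_cuntzLE (smul_nonneg hr.le ha) ha ?_
        rw [her_smul_eq hr.ne']
        exact mem_her_self ha
      have step2 : CuntzLE ((1 - t) • a) ((1 - t) • a + t • b) :=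
        cuntzLE_of_le (smul_nonneg hr.le ha) hc
          (le_add_of_nonneg_right (smul_nonneg ht0 hb))
      exact step1.trans' step2
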